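/- arXiv:2508.20730 — 5 statements merged into one kernel-verified Lean document; each statement's English description precedes it below -/
import Mathlib

section
/- There exists a constant C > 0 such that for every r ∈ (0, 2) and every pair of differentiable functions a, ψ : [0, ∞) → ℝ satisfying a'(t) = −r·ψ(t) and ψ'(t) = r·a(t) − r²·ψ(t) for all t ≥ 0, one has |a(t)| + |ψ(t)| ≤ C·e^{−r²t/4}·(|a(0)| + |ψ(0)|) for all t ≥ 0. -/
set_option maxHeartbeats 1000000

/-- Uniform low-frequency heat-like decay: there is a constant `C > 0` such that
for every `r ∈ (0, 2)` every solution of `a' = −rψ`, `ψ' = ra − r²ψ` on `[0, ∞)`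
satisfies `|a(t)| + |ψ(t)| ≤ C e^{−r²t/4} (|a(0)| + |ψ(0)|)`. -/
theorem low_frequency_decay :
    ∃ C > (0:ℝ), ∀ r : ℝ, 0 < r → r < 2 →
      ∀ a ψ : ℝ → ℝ,
      (∀ t ≥ (0:ℝ), HasDerivAt a (-r * ψ t) t) →
      (∀ t ≥ (0:ℝ), HasDerivAt ψ (r * a t - r^2 * ψ t) t) →
      ∀ t ≥ (0:ℝ), |a t| + |ψ t| ≤
        C * Real.exp (-r^2*t/4) * (|a 0| + |ψ 0|) := by
  refine ⟨5, by norm_num, ?_⟩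
  intro r hr hr2 a ψ ha hψ t ht
  set L : ℝ → ℝ := fun s => (a s)^2 + (ψ s)^2 - (4/5)*r*(a s * ψ s) with hLdef
  set L' : ℝ → ℝ := fun s =>
      2*a s*(-r*ψ s) + 2*ψ s*(r*a s - r^2*ψ s)
        - (4/5)*r*((-r*ψ s)*(ψ s) + a s*(r*a s - r^2*ψ s)) with hL'def
  set H : ℝ → ℝ := fun s => L s * Real.exp (r^2/2 * s) with hHdef
  have hLderiv : ∀ s ∈ Set.Ici (0:ℝ), HasDerivAt L (L' s) s := by
    intro s hs
    have h1 := ha s hs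
    have h2 := hψ s hs
    have h3 := ((h1.pow 2).add (h2.pow 2)).sub
      (HasDerivAt.const_mul ((4:ℝ)/5*r) (h1.mul h2))
    convert h3 using 1
    · rfl
    · rfl
    · rfl
    simp only [hL'def]
    ring
  have hexp : ∀ s : ℝ, HasDerivAt (fun u => Real.exp (r^2/2 * u))
      (Real.exp (r^2/2 * s) * (r^2/2)) s := by
    intro s
    have := ((hasDerivAt_id s).const_mul (r^2/2)).exp
    simpa using this
  have hHderiv : ∀ s ∈ Set.Ici (0:ℝ),
      HasDerivAt H ((L' s + r^2/2 * L s) * Real.exp (r^2/2 * s)) s := by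
    intro s hs
    have := (hLderiv s hs).mul (hexp s)
    convert this using 1
    · rfl
    · rfl
    · rfl
    ring
  have key : ∀ s : ℝ, L' s + r^2/2 * L s ≤ 0 := by
    intro s
    simp only [hL'def, hLdef]
    nlinarith [sq_nonneg (r*(3*a s - 2*r*ψ s)),
      mul_nonneg (mul_nonneg (by linarith : (0:ℝ) ≤ 2 - r) (by linarith : (0:ℝ) ≤ 2 + r))
        (sq_nonneg (r * ψ s)),
      sq_nonneg (r * ψ s)]
  have hH : AntitoneOn H (Set.Ici 0) := by
    apply antitoneOn_of_deriv_nonpos (convex_Ici 0)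
    · exact fun s hs => (hHderiv s hs).continuousAt.continuousWithinAt
    · intro s hs
      rw [interior_Ici] at hs
      exact (hHderiv s (Set.mem_Ici.mpr (le_of_lt (Set.mem_Ioi.mp hs)))).differentiableAt.differentiableWithinAt
    · intro s hs
      rw [interior_Ici] at hs
      rw [(hHderiv s (Set.mem_Ici.mpr (Set.mem_Ioi.mp hs).le)).deriv]
      exact mul_nonpos_of_nonpos_of_nonneg (key s) (Real.exp_nonneg _)
  have hHt : L t * Real.exp (r^2/2 * t) ≤ L 0 := by
    have h := hH Set.self_mem_Ici (Set.mem_Ici.2 ht) ht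
    simpa [hHdef] using h
  have hexp2 : (Real.exp (-r^2*t/4))^2 = Real.exp (-(r^2/2 * t)) := by
    rw [sq, ← Real.exp_add]
    congr 1
    ring
  have hLt : L t ≤ L 0 * Real.exp (-(r^2/2 * t)) := by
    have hepos : (0:ℝ) < Real.exp (r^2/2 * t) := Real.exp_pos _
    have := mul_le_mul_of_nonneg_right hHt (Real.exp_nonneg (-(r^2/2 * t)))
    rwa [mul_assoc, ← Real.exp_add, add_neg_cancel, Real.exp_zero, mul_one] at this
  have hE : (a t)^2 + (ψ t)^2 ≤ 5 * L t := by
    simp only [hLdef]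
    nlinarith [mul_nonneg hr.le (sq_nonneg (a t - ψ t)),
      mul_nonneg (by linarith : (0:ℝ) ≤ 2 - r) (sq_nonneg (a t)),
      mul_nonneg (by linarith : (0:ℝ) ≤ 2 - r) (sq_nonneg (ψ t))]
  have hL0 : L 0 ≤ (9/5) * ((a 0)^2 + (ψ 0)^2) := by
    simp only [hLdef]
    nlinarith [mul_nonneg hr.le (sq_nonneg (a 0 + ψ 0)),
      mul_nonneg (by linarith : (0:ℝ) ≤ 2 - r) (sq_nonneg (a 0)),
      mul_nonneg (by linarith : (0:ℝ) ≤ 2 - r) (sq_nonneg (ψ 0))]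
  have hE0 : (a 0)^2 + (ψ 0)^2 ≤ (|a 0| + |ψ 0|)^2 := by
    nlinarith [mul_nonneg (abs_nonneg (a 0)) (abs_nonneg (ψ 0)), sq_abs (a 0), sq_abs (ψ 0)]
  have hXnn : (0:ℝ) ≤ |a t| + |ψ t| := by positivity
  have hYnn : (0:ℝ) ≤ 5 * Real.exp (-r^2*t/4) * (|a 0| + |ψ 0|) := by positivity
  have hsq : (|a t| + |ψ t|)^2 ≤ (5 * Real.exp (-r^2*t/4) * (|a 0| + |ψ 0|))^2 := by
    have hXsq : (|a t| + |ψ t|)^2 ≤ 2 * ((a t)^2 + (ψ t)^2) := by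
      nlinarith [sq_nonneg (|a t| - |ψ t|), sq_abs (a t), sq_abs (ψ t)]
    have hepos : (0:ℝ) < Real.exp (-(r^2/2 * t)) := Real.exp_pos _
    have hchain : 10 * (L 0 * Real.exp (-(r^2/2 * t))) ≤
        18 * ((|a 0| + |ψ 0|)^2 * Real.exp (-(r^2/2 * t))) := by
      have h1 : L 0 ≤ (9/5) * (|a 0| + |ψ 0|)^2 := by linarith
      linarith [mul_le_mul_of_nonneg_right h1 hepos.le]
    have hRHS : (5 * Real.exp (-r^2*t/4) * (|a 0| + |ψ 0|))^2
        = 25 * ((|a 0| + |ψ 0|)^2 * Real.exp (-(r^2/2 * t))) := by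
      rw [mul_pow, mul_pow, hexp2]; ring
    have hpos2 : (0:ℝ) ≤ (|a 0| + |ψ 0|)^2 * Real.exp (-(r^2/2 * t)) := by positivity
    rw [hRHS]
    calc (|a t| + |ψ t|)^2 ≤ 2 * ((a t)^2 + (ψ t)^2) := hXsq
      _ ≤ 10 * L t := by linarith
      _ ≤ 10 * (L 0 * Real.exp (-(r^2/2 * t))) := by linarith
      _ ≤ 18 * ((|a 0| + |ψ 0|)^2 * Real.exp (-(r^2/2 * t))) := hchain
      _ ≤ 25 * ((|a 0| + |ψ 0|)^2 * Real.exp (-(r^2/2 * t))) := by linarith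
  exact (pow_le_pow_iff_left₀ hXnn hYnn two_ne_zero).mp hsq
end

section
/- There exists a constant C > 0 such that for every r ≥ 2√2 and every pair of differentiable functions a, ψ : [0, ∞) → ℝ satisfying a'(t) = −r·ψ(t) and ψ'(t) = r·a(t) − r²·ψ(t) for all t ≥ 0, one has for all t ≥ 0: |a(t)| ≤ C·e^{−t}·(|a(0)| + |ψ(0)|/r) and |ψ(t)| ≤ C·e^{−t}·(|a(0)|/r + |ψ(0)|/r²) + C·e^{−r²t/2}·|ψ(0)|. -/
lemma lin_ode_sol (L : ℝ) (u : ℝ → ℝ)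
    (h : ∀ t ≥ (0:ℝ), HasDerivAt u (L * u t) t) :
    ∀ t ≥ (0:ℝ), u t = Real.exp (L * t) * u 0 := by
  intro t ht
  set g : ℝ → ℝ := fun x => Real.exp (-L * x) * u x with hg
  have hgd : ∀ x ≥ (0:ℝ), HasDerivAt g 0 x := by
    intro x hx
    have h1 := (Real.hasDerivAt_exp (-L * x)).comp x ((hasDerivAt_id x).const_mul (-L))
    have h2 := h1.mul (h x hx)
    simp only [Function.comp] at h2
    refine h2.congr_deriv ?_
    ring
  have hcont : ContinuousOn g (Set.Icc 0 t) := fun x hx =>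
    (hgd x hx.1).continuousAt.continuousWithinAt
  have hconst := constant_of_has_deriv_right_zero hcont
    (fun x hx => (hgd x hx.1).hasDerivWithinAt) t (Set.mem_Icc.mpr ⟨ht, le_refl t⟩)
  have hkey : Real.exp (-L * t) * u t = u 0 := by simpa [hg] using hconst
  calc u t = Real.exp (L * t) * (Real.exp (-L * t) * u t) := by
        rw [← mul_assoc, ← Real.exp_add]; simp
    _ = Real.exp (L * t) * u 0 := by rw [hkey]

lemma arith_a (r s A P e : ℝ) (hr : 2 ≤ r) (hs : r^2/2 ≤ s)
    (hA : 0 ≤ A) (hP : 0 ≤ P) (he : 0 ≤ e) :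
    e * ((2*r + r^3) * A + 4 * r^2 * P) ≤ r * s * (100 * e * (A + P / r)) := by
  have hr0 : (0:ℝ) < r := by linarith
  have h1 : r * s * (100 * e * (A + P / r)) = 100*e*(r*s*A) + 100*e*(s*P) := by
    field_simp
  have h2 : 2*r + r^3 ≤ 100*(r*s) := by nlinarith
  have h3 : 4*r^2 ≤ 100*s := by nlinarith
  have h4 : e*((2*r+r^3)*A) ≤ e*((100*(r*s))*A) :=
    mul_le_mul_of_nonneg_left (mul_le_mul_of_nonneg_right h2 hA) he
  have h5 : e*(4*r^2*P) ≤ e*((100*s)*P) :=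
    mul_le_mul_of_nonneg_left (mul_le_mul_of_nonneg_right h3 hP) he
  rw [h1]
  nlinarith [h4, h5]

lemma arith_psi (r s A P e f : ℝ) (hr : 2 ≤ r) (hs : r^2/2 ≤ s)
    (hA : 0 ≤ A) (hP : 0 ≤ P) (he : 0 ≤ e) (hf : 0 ≤ f) :
    e*(2*r*A + 2*P) + f*(r^2*P) ≤ s*(100*e*(A/r + P/r^2) + 100*f*P) := by
  have hr0 : (0:ℝ) < r := by linarith
  have hr2 : (0:ℝ) < r^2 := by positivity
  rw [← mul_le_mul_iff_right₀ hr2]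
  have h1 : r^2 * (s*(100*e*(A/r + P/r^2) + 100*f*P))
      = 100*e*(s*A*r) + 100*e*(s*P) + 100*f*(s*P)*r^2 := by
    field_simp
  rw [h1]
  have h2 : 2*r^3 ≤ 100*(s*r) := by nlinarith
  have h3 : 2*r^2 ≤ 100*s := by nlinarith
  have h4 : r^2 ≤ 100*s := by nlinarith
  have h5 : e*(2*r^3*A) ≤ e*((100*(s*r))*A) :=
    mul_le_mul_of_nonneg_left (mul_le_mul_of_nonneg_right h2 hA) he
  have h6 : e*(2*r^2*P) ≤ e*((100*s)*P) :=
    mul_le_mul_of_nonneg_left (mul_le_mul_of_nonneg_right h3 hP) he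
  have h7 : f*(r^2*(P*r^2)) ≤ f*((100*s)*(P*r^2)) :=
    mul_le_mul_of_nonneg_left
      (mul_le_mul_of_nonneg_right h4 (by positivity)) hf
  nlinarith [h5, h6, h7]

/-- Uniform high-frequency damping: there is a constant `C > 0` such that for every
`r ≥ 2√2` every solution of `a' = −rψ`, `ψ' = ra − r²ψ` on `[0, ∞)` satisfies
`|a(t)| ≤ C e^{−t}(|a(0)| + |ψ(0)|/r)` and
`|ψ(t)| ≤ C e^{−t}(|a(0)|/r + |ψ(0)|/r²) + C e^{−r²t/2}|ψ(0)|`. -/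
theorem high_frequency_decay :
    ∃ C > (0:ℝ), ∀ r : ℝ, 2 * Real.sqrt 2 ≤ r →
      ∀ a ψ : ℝ → ℝ,
      (∀ t ≥ (0:ℝ), HasDerivAt a (-r * ψ t) t) →
      (∀ t ≥ (0:ℝ), HasDerivAt ψ (r * a t - r^2 * ψ t) t) →
      ∀ t ≥ (0:ℝ),
        |a t| ≤ C * Real.exp (-t) * (|a 0| + |ψ 0| / r) ∧
        |ψ t| ≤ C * Real.exp (-t) * (|a 0| / r + |ψ 0| / r^2)
          + C * Real.exp (-r^2*t/2) * |ψ 0| := by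
  refine ⟨100, by norm_num, ?_⟩
  intro r hr a ψ ha hψ t ht
  have hs2' : Real.sqrt 2 ^ 2 = 2 := Real.sq_sqrt (by norm_num)
  have hsqrt2 : (1:ℝ) ≤ Real.sqrt 2 := by nlinarith [Real.sqrt_nonneg 2]
  have hr2 : (2:ℝ) ≤ r := by nlinarith
  have hrpos : (0:ℝ) < r := by linarith
  have hr8 : (8:ℝ) ≤ r^2 := by nlinarith
  set s : ℝ := Real.sqrt (r^4 - 4*r^2) with hs_def
  have hs0 : 0 ≤ s := Real.sqrt_nonneg _
  have hs2 : s^2 = r^4 - 4*r^2 := Real.sq_sqrt (by nlinarith)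
  have hs_lb : r^2/2 ≤ s := by nlinarith [sq_nonneg (s - r^2/2), sq_nonneg (s + r^2/2)]
  have hs_ub : s ≤ r^2 - 2 := by nlinarith [sq_nonneg (s - (r^2-2))]
  have hs_lb2 : r^2 - 4 ≤ s := by nlinarith [sq_nonneg (s - (r^2-4))]
  set L2 : ℝ := (-r^2 + s)/2 with hL2_def
  set L3 : ℝ := (-r^2 - s)/2 with hL3_def
  have hL2a : L2 ≤ -1 := by rw [hL2_def]; linarith
  have hL2b : -2 ≤ L2 := by rw [hL2_def]; linarith
  have hL3a : L3 ≤ -(r^2)/2 := by rw [hL3_def]; linarith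
  have hL3b : -(r^2) ≤ L3 := by rw [hL3_def]; linarith
  have hE2 : L2^2 + r^2*L2 + r^2 = 0 := by rw [hL2_def]; linear_combination hs2/4
  have hE3 : L3^2 + r^2*L3 + r^2 = 0 := by rw [hL3_def]; linear_combination hs2/4
  -- eigenmodes
  have mode : ∀ L : ℝ, L^2 + r^2*L + r^2 = 0 →
      ∀ x ≥ (0:ℝ), r * a x + L * ψ x = Real.exp (L * x) * (r * a 0 + L * ψ 0) := by
    intro L hE
    apply lin_ode_sol L (fun x => r * a x + L * ψ x)
    intro x hx
    have h2 := ((ha x hx).const_mul r).add ((hψ x hx).const_mul L)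
    have heq : r * (-r * ψ x) + L * (r * a x - r^2 * ψ x) = L * (r * a x + L * ψ x) := by
      linear_combination (-ψ x) * hE
    exact heq ▸ h2
  have hu2 := mode L2 hE2 t ht
  have hu3 := mode L3 hE3 t ht
  set A := |a 0| with hA_def
  set P := |ψ 0| with hP_def
  have hA0 : 0 ≤ A := abs_nonneg _
  have hP0 : 0 ≤ P := abs_nonneg _
  set E2 := Real.exp (L2 * t) with hE2_def
  set E3 := Real.exp (L3 * t) with hE3_def
  have hE2pos : 0 < E2 := Real.exp_pos _
  have hE3pos : 0 < E3 := Real.exp_pos _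
  have hE2le : E2 ≤ Real.exp (-t) := by
    apply Real.exp_le_exp.mpr
    have := mul_le_mul_of_nonneg_right hL2a ht
    linarith
  have hE3le : E3 ≤ Real.exp (-r^2*t/2) := by
    apply Real.exp_le_exp.mpr
    have := mul_le_mul_of_nonneg_right hL3a ht
    linarith
  have hE3le' : E3 ≤ Real.exp (-t) := by
    apply Real.exp_le_exp.mpr
    have hL3c : L3 ≤ -1 := by linarith
    have := mul_le_mul_of_nonneg_right hL3c ht
    linarith
  have hetpos : 0 < Real.exp (-t) := Real.exp_pos _
  have hert : 0 < Real.exp (-r^2*t/2) := Real.exp_pos _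
  -- bounds on initial eigenmode data
  have hU2 : |r * a 0 + L2 * ψ 0| ≤ r * A + 2 * P := by
    calc |r * a 0 + L2 * ψ 0| ≤ |r * a 0| + |L2 * ψ 0| := abs_add_le _ _
      _ = |r| * A + |L2| * P := by rw [abs_mul, abs_mul]
      _ ≤ r * A + 2 * P := by
          have h1 : |r| = r := abs_of_pos hrpos
          have h2 : |L2| ≤ 2 := abs_le.mpr ⟨by linarith, by linarith⟩
          rw [h1]; gcongr
  have hU3 : |r * a 0 + L3 * ψ 0| ≤ r * A + r^2 * P := by
    calc |r * a 0 + L3 * ψ 0| ≤ |r * a 0| + |L3 * ψ 0| := abs_add_le _ _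
      _ = |r| * A + |L3| * P := by rw [abs_mul, abs_mul]
      _ ≤ r * A + r^2 * P := by
          have h1 : |r| = r := abs_of_pos hrpos
          have h2 : |L3| ≤ r^2 := abs_le.mpr ⟨by linarith, by linarith⟩
          rw [h1]; gcongr
  -- recover a and ψ from the eigenmodes
  have hat : r * s * a t = L2 * (E3 * (r * a 0 + L3 * ψ 0))
      - L3 * (E2 * (r * a 0 + L2 * ψ 0)) := by
    rw [hE2_def, hE3_def, ← hu2, ← hu3, hL2_def, hL3_def]; ring
  have hpt : s * ψ t = E2 * (r * a 0 + L2 * ψ 0) - E3 * (r * a 0 + L3 * ψ 0) := by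
    rw [hE2_def, hE3_def, ← hu2, ← hu3, hL2_def, hL3_def]; ring
  have habs2 : |L2| ≤ 2 := abs_le.mpr ⟨by linarith, by linarith⟩
  have habs3 : |L3| ≤ r^2 := abs_le.mpr ⟨by linarith, by linarith⟩
  constructor
  · -- bound on a
    have h1 : |r * s * a t| ≤ |L2| * (E3 * |r * a 0 + L3 * ψ 0|)
        + |L3| * (E2 * |r * a 0 + L2 * ψ 0|) := by
      rw [hat]
      calc |L2 * (E3 * (r * a 0 + L3 * ψ 0)) - L3 * (E2 * (r * a 0 + L2 * ψ 0))|
          ≤ |L2 * (E3 * (r * a 0 + L3 * ψ 0))| + |L3 * (E2 * (r * a 0 + L2 * ψ 0))| :=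
            abs_sub _ _
        _ = |L2| * (E3 * |r * a 0 + L3 * ψ 0|) + |L3| * (E2 * |r * a 0 + L2 * ψ 0|) := by
            rw [abs_mul, abs_mul, abs_mul, abs_mul, abs_of_pos hE2pos, abs_of_pos hE3pos]
    have h2 : |L2| * (E3 * |r * a 0 + L3 * ψ 0|) ≤ 2 * (Real.exp (-t) * (r * A + r^2 * P)) := by
      gcongr
    have h3 : |L3| * (E2 * |r * a 0 + L2 * ψ 0|) ≤ r^2 * (Real.exp (-t) * (r * A + 2 * P)) := by
      gcongr
    have h4 : |r * s * a t| = r * s * |a t| := by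
      rw [abs_mul, abs_mul, abs_of_pos hrpos, abs_of_nonneg hs0]
    have key : r * s * |a t| ≤ Real.exp (-t) * ((2*r + r^3) * A + 4 * r^2 * P) := by
      have h5 : 2 * (Real.exp (-t) * (r * A + r^2 * P)) + r^2 * (Real.exp (-t) * (r * A + 2 * P))
          = Real.exp (-t) * ((2*r + r^3) * A + 4 * r^2 * P) := by ring
      rw [← h4, ← h5]
      linarith
    have target := arith_a r s A P (Real.exp (-t)) hr2 hs_lb hA0 hP0 hetpos.le
    have hrs : 0 < r * s := mul_pos hrpos (by linarith)
    exact le_of_mul_le_mul_left (key.trans target) hrs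
  · -- bound on ψ
    have hspos : 0 < s := by linarith
    have h1 : |s * ψ t| ≤ E2 * |r * a 0 + L2 * ψ 0| + E3 * |r * a 0 + L3 * ψ 0| := by
      rw [hpt]
      calc |E2 * (r * a 0 + L2 * ψ 0) - E3 * (r * a 0 + L3 * ψ 0)|
          ≤ |E2 * (r * a 0 + L2 * ψ 0)| + |E3 * (r * a 0 + L3 * ψ 0)| := abs_sub _ _
        _ = E2 * |r * a 0 + L2 * ψ 0| + E3 * |r * a 0 + L3 * ψ 0| := by
            rw [abs_mul, abs_mul, abs_of_pos hE2pos, abs_of_pos hE3pos]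
    have h2 : E2 * |r * a 0 + L2 * ψ 0| ≤ Real.exp (-t) * (r * A + 2 * P) := by gcongr
    have h3 : E3 * |r * a 0 + L3 * ψ 0| ≤ E3 * (r * A + r^2 * P) :=
      mul_le_mul_of_nonneg_left hU3 hE3pos.le
    have h4 : E3 * (r * A) ≤ Real.exp (-t) * (r * A) :=
      mul_le_mul_of_nonneg_right hE3le' (by positivity)
    have h5 : E3 * (r^2 * P) ≤ Real.exp (-r^2*t/2) * (r^2 * P) :=
      mul_le_mul_of_nonneg_right hE3le (by positivity)
    have h6 : |s * ψ t| = s * |ψ t| := by rw [abs_mul, abs_of_nonneg hs0]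
    have key : s * |ψ t| ≤ Real.exp (-t) * (2*r*A + 2*P) + Real.exp (-r^2*t/2) * (r^2 * P) := by
      have h7 : E3 * (r * A + r^2 * P) = E3 * (r * A) + E3 * (r^2 * P) := by ring
      have h8 : Real.exp (-t) * (r * A + 2 * P) + (Real.exp (-t) * (r * A)
          + Real.exp (-r^2*t/2) * (r^2 * P))
          = Real.exp (-t) * (2*r*A + 2*P) + Real.exp (-r^2*t/2) * (r^2 * P) := by ring
      rw [← h6, ← h8]
      linarith
    have target := arith_psi r s A P (Real.exp (-t)) (Real.exp (-r^2*t/2))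
      hr2 hs_lb hA0 hP0 hetpos.le hert.le
    exact le_of_mul_le_mul_left (key.trans target) hspos
end

section
/- There exists a constant C > 0 such that for all τ ∈ (0, 1/4], all r ∈ (0, 1], and all differentiable functions u, a, ψ : [0, ∞) → ℝ satisfying u'(t) = −(1/τ)·(u(t) − ψ(t)), a'(t) = −r·ψ(t), and ψ'(t) = r·a(t) − r²·ψ(t) for all t ≥ 0, one has |u(t) − ψ(t)| ≤ e^{−t/τ}·|u(0) − ψ(0)| + C·τ·r·e^{−r²t/4}·(|a(0)| + |ψ(0)|) for all t ≥ 0. -/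
open Real Set

/-- Helper: `f 0 ≤ f t` on `[0,∞)` from nonneg derivative. -/
lemma mono_from_deriv {f f' : ℝ → ℝ}
    (hf : ∀ t ≥ (0:ℝ), HasDerivAt f (f' t) t)
    (h0 : ∀ t ≥ (0:ℝ), 0 ≤ f' t) :
    ∀ t ≥ (0:ℝ), f 0 ≤ f t := by
  have hm : MonotoneOn f (Ici (0:ℝ)) := by
    apply monotoneOn_of_hasDerivWithinAt_nonneg (f' := f') (convex_Ici 0)
    · intro x hx
      exact ((hf x hx).continuousAt).continuousWithinAt
    · intro x hx
      rw [interior_Ici] at hx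
      exact ((hf x (le_of_lt hx))).hasDerivWithinAt
    · intro x hx
      rw [interior_Ici] at hx
      exact h0 x (le_of_lt hx)
  intro t ht
  exact hm (self_mem_Ici) ht ht

/-- Helper: cross term bound. -/
lemma cross_bound {r : ℝ} (hr : 0 < r) (hr1 : r ≤ 1) (x y : ℝ) :
    r * (x * y) ≤ (x^2 + y^2)/2 := by
  rcases le_or_gt 0 (x*y) with h | h
  · nlinarith [sq_nonneg (x - y), mul_le_mul_of_nonneg_right hr1 h]
  · nlinarith [sq_nonneg x, sq_nonneg y, mul_neg_of_pos_of_neg hr h]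

set_option maxHeartbeats 1000000 in
/-- Low-frequency estimate for the relative velocity mode: there is `C > 0` such
that for `τ ∈ (0, 1/4]`, `r ∈ (0, 1]`, and solutions of `u' = −(1/τ)(u − ψ)`,
`a' = −rψ`, `ψ' = ra − r²ψ`, one has
`|u(t) − ψ(t)| ≤ e^{−t/τ}|u(0) − ψ(0)| + Cτr e^{−r²t/4}(|a(0)| + |ψ(0)|)`. -/
theorem relative_velocity_low_frequency :
    ∃ C > (0:ℝ), ∀ τ r : ℝ, 0 < τ → τ ≤ 1/4 → 0 < r → r ≤ 1 →
      ∀ u a ψ : ℝ → ℝ,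
      (∀ t ≥ (0:ℝ), HasDerivAt u (-(1/τ) * (u t - ψ t)) t) →
      (∀ t ≥ (0:ℝ), HasDerivAt a (-r * ψ t) t) →
      (∀ t ≥ (0:ℝ), HasDerivAt ψ (r * a t - r^2 * ψ t) t) →
      ∀ t ≥ (0:ℝ), |u t - ψ t| ≤
        Real.exp (-t/τ) * |u 0 - ψ 0|
          + C * τ * r * Real.exp (-r^2*t/4) * (|a 0| + |ψ 0|) := by
  refine ⟨5, by norm_num, ?_⟩
  intro τ r hτ hτ4 hr hr1 u a ψ hu ha hψ
  have hr2 : r^2 ≤ 1 := by nlinarith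
  set S := |a 0| + |ψ 0| with hS
  have hSnn : 0 ≤ S := by positivity
  -- modified energy F
  set F : ℝ → ℝ := fun t => a t ^ 2 + ψ t ^ 2 - r * (a t * ψ t) with hFdef
  set G : ℝ → ℝ := fun t => F t * Real.exp (r^2/2 * t) with hGdef
  set D : ℝ → ℝ := fun t =>
    (2 * a t * (-r * ψ t) + 2 * ψ t * (r * a t - r^2 * ψ t)
      - r * ((-r * ψ t) * ψ t + a t * (r * a t - r^2 * ψ t))) * Real.exp (r^2/2 * t)
      + F t * (Real.exp (r^2/2 * t) * (r^2/2)) with hDdef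
  have hG' : ∀ t ≥ (0:ℝ), HasDerivAt G (D t) t := by
    intro t ht
    have hF' : HasDerivAt F (2 * a t * (-r * ψ t) + 2 * ψ t * (r * a t - r^2 * ψ t)
        - r * ((-r * ψ t) * ψ t + a t * (r * a t - r^2 * ψ t))) t := by
      have h1 := ((ha t ht).pow 2)
      have h2 := ((hψ t ht).pow 2)
      have h3 := ((ha t ht).mul (hψ t ht)).const_mul r
      have := (h1.add h2).sub h3
      refine this.congr_deriv ?_
      norm_num
    have he : HasDerivAt (fun t => Real.exp (r^2/2 * t)) (Real.exp (r^2/2 * t) * (r^2/2)) t := by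
      have : HasDerivAt (fun t : ℝ => r^2/2 * t) (r^2/2) t := by
        simpa using (hasDerivAt_id t).const_mul (r^2/2)
      exact this.exp
    exact hF'.mul he
  have hDle : ∀ t ≥ (0:ℝ), D t ≤ 0 := by
    intro t ht
    have hE : (0:ℝ) < Real.exp (r^2/2 * t) := Real.exp_pos _
    have hcross := cross_bound hr hr1 (a t) (ψ t)
    have key : (2 * a t * (-r * ψ t) + 2 * ψ t * (r * a t - r^2 * ψ t)
        - r * ((-r * ψ t) * ψ t + a t * (r * a t - r^2 * ψ t)))
        + F t * (r^2/2) ≤ 0 := by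
      have heq : (2 * a t * (-r * ψ t) + 2 * ψ t * (r * a t - r^2 * ψ t)
          - r * ((-r * ψ t) * ψ t + a t * (r * a t - r^2 * ψ t)))
          + F t * (r^2/2)
          = (r^2/2) * (r * (a t * ψ t) - (a t ^ 2 + ψ t ^ 2)) := by
        simp only [hFdef]; ring
      rw [heq]
      have h2 : r * (a t * ψ t) - (a t ^ 2 + ψ t ^ 2) ≤ 0 := by
        nlinarith [sq_nonneg (a t), sq_nonneg (ψ t)]
      have h3 : (0:ℝ) ≤ r^2/2 := by positivity
      exact mul_nonpos_of_nonneg_of_nonpos h3 h2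
    have hDeq : D t = ((2 * a t * (-r * ψ t) + 2 * ψ t * (r * a t - r^2 * ψ t)
        - r * ((-r * ψ t) * ψ t + a t * (r * a t - r^2 * ψ t)))
        + F t * (r^2/2)) * Real.exp (r^2/2 * t) := by
      simp only [hDdef]; ring
    rw [hDeq]
    exact mul_nonpos_of_nonpos_of_nonneg key hE.le
  have hGle : ∀ t ≥ (0:ℝ), G t ≤ G 0 := by
    intro t ht
    have hmono := mono_from_deriv (f := fun t => -G t) (f' := fun t => -D t)
      (fun s hs => (hG' s hs).neg)
      (fun s hs => by rw [neg_nonneg]; exact hDle s hs)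
    have h : -G 0 ≤ -G t := hmono t ht
    linarith
  -- pointwise decay of a and ψ
  have hFt : ∀ t ≥ (0:ℝ), F t ≤ (3/2) * S^2 * Real.exp (-(r^2/2) * t) := by
    intro t ht
    have h1 := hGle t ht
    have hG0 : G 0 = F 0 := by simp [hGdef]
    have hF0 : F 0 ≤ (3/2) * S^2 := by
      have hcross := cross_bound hr hr1 (a 0) (-ψ 0)
      simp only [hFdef, hS]
      nlinarith [sq_abs (a 0), sq_abs (ψ 0),
        mul_nonneg (abs_nonneg (a 0)) (abs_nonneg (ψ 0))]
    have hEpos : (0:ℝ) < Real.exp (r^2/2 * t) := Real.exp_pos _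
    have h2 : F t * Real.exp (r^2/2 * t) ≤ (3/2) * S^2 := by
      calc F t * Real.exp (r^2/2 * t) = G t := rfl
        _ ≤ G 0 := h1
        _ = F 0 := hG0
        _ ≤ (3/2) * S^2 := hF0
    have hinv : Real.exp (-(r^2/2) * t) = (Real.exp (r^2/2 * t))⁻¹ := by
      rw [← Real.exp_neg]; ring_nf
    rw [hinv, ← div_eq_mul_inv, le_div_iff₀ hEpos]
    exact h2
  have hbound : ∀ t ≥ (0:ℝ), |a t| ≤ 2 * S * Real.exp (-r^2*t/4) ∧
      |ψ t| ≤ 2 * S * Real.exp (-r^2*t/4) := by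
    intro t ht
    have hFt' := hFt t ht
    have hcoerc : a t ^ 2 + ψ t ^ 2 ≤ 2 * F t := by
      have hcross := cross_bound hr hr1 (a t) (ψ t)
      simp only [hFdef]
      linarith
    set E := Real.exp (-r^2*t/4) with hE
    have hEpos : 0 < E := Real.exp_pos _
    have hsq : Real.exp (-(r^2/2) * t) = E * E := by
      rw [hE, ← Real.exp_add]; ring_nf
    have hkey : a t ^ 2 + ψ t ^ 2 ≤ 3 * S^2 * (E * E) := by
      have h5 : F t ≤ 3/2 * S^2 * (E * E) := by rw [← hsq]; exact hFt'
      have h6 : 2 * F t ≤ 2 * (3/2 * S^2 * (E * E)) :=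
        mul_le_mul_of_nonneg_left h5 (by norm_num)
      calc a t ^ 2 + ψ t ^ 2 ≤ 2 * F t := hcoerc
        _ ≤ 2 * (3/2 * S^2 * (E * E)) := h6
        _ = 3 * S^2 * (E * E) := by ring
    have h2SE : (0:ℝ) ≤ 2 * S * E := by positivity
    constructor
    · have ha2 : a t ^ 2 ≤ (2 * S * E)^2 := by nlinarith [sq_nonneg (ψ t), sq_nonneg (S * E)]
      calc |a t| = Real.sqrt (a t ^ 2) := (Real.sqrt_sq_eq_abs _).symm
        _ ≤ Real.sqrt ((2 * S * E)^2) := Real.sqrt_le_sqrt ha2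
        _ = 2 * S * E := Real.sqrt_sq h2SE
    · have hp2 : ψ t ^ 2 ≤ (2 * S * E)^2 := by nlinarith [sq_nonneg (a t), sq_nonneg (S * E)]
      calc |ψ t| = Real.sqrt (ψ t ^ 2) := (Real.sqrt_sq_eq_abs _).symm
        _ ≤ Real.sqrt ((2 * S * E)^2) := Real.sqrt_le_sqrt hp2
        _ = 2 * S * E := Real.sqrt_sq h2SE
  -- w = v * exp(t/τ)
  set lam := 1/τ - r^2/4 with hlam
  have hτinv : (4:ℝ) ≤ 1/τ := by
    rw [le_div_iff₀ hτ]; linarith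
  have hlampos : 0 < lam := by rw [hlam]; linarith
  set K := 4 * r * S with hK
  have hKnn : 0 ≤ K := by positivity
  set w : ℝ → ℝ := fun t => (u t - ψ t) * Real.exp (t/τ) with hw
  set W : ℝ → ℝ := fun t =>
    (-(1/τ) * (u t - ψ t) - (r * a t - r^2 * ψ t)) * Real.exp (t/τ)
      + (u t - ψ t) * (Real.exp (t/τ) * (1/τ)) with hWdef
  have hw' : ∀ t ≥ (0:ℝ), HasDerivAt w (W t) t := by
    intro t ht
    have hv : HasDerivAt (fun t => u t - ψ t)
        (-(1/τ) * (u t - ψ t) - (r * a t - r^2 * ψ t)) t := (hu t ht).sub (hψ t ht)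
    have he : HasDerivAt (fun t => Real.exp (t/τ)) (Real.exp (t/τ) * (1/τ)) t := by
      have : HasDerivAt (fun t : ℝ => t/τ) (1/τ) t := by
        simpa using (hasDerivAt_id t).div_const τ
      exact this.exp
    exact hv.mul he
  have hWbound : ∀ t ≥ (0:ℝ), |W t| ≤ K * Real.exp (lam * t) := by
    intro t ht
    have heq : W t = -(r * a t - r^2 * ψ t) * Real.exp (t/τ) := by
      simp only [hWdef]; ring
    rw [heq, abs_mul, abs_neg, abs_exp]
    obtain ⟨hat, hpt⟩ := hbound t ht
    have h1 : |r * a t - r^2 * ψ t| ≤ r * (|a t| + |ψ t|) := by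
      calc |r * a t - r^2 * ψ t| ≤ |r * a t| + |r^2 * ψ t| := abs_sub _ _
        _ = r * |a t| + r^2 * |ψ t| := by
            rw [abs_mul, abs_mul, abs_of_pos hr, abs_of_pos (by positivity : (0:ℝ) < r^2)]
        _ ≤ r * (|a t| + |ψ t|) := by
            nlinarith [mul_nonneg (mul_nonneg hr.le (sub_nonneg.2 hr1)) (abs_nonneg (ψ t))]
    have h2 : |a t| + |ψ t| ≤ 4 * S * Real.exp (-r^2*t/4) := by linarith
    have h3 : Real.exp (t/τ) * Real.exp (-r^2*t/4) = Real.exp (lam * t) := by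
      rw [← Real.exp_add, hlam]; ring_nf
    calc |r * a t - r^2 * ψ t| * Real.exp (t/τ)
        ≤ (r * (4 * S * Real.exp (-r^2*t/4))) * Real.exp (t/τ) := by
          apply mul_le_mul_of_nonneg_right _ (Real.exp_pos _).le
          calc |r * a t - r^2 * ψ t| ≤ r * (|a t| + |ψ t|) := h1
            _ ≤ r * (4 * S * Real.exp (-r^2*t/4)) :=
              mul_le_mul_of_nonneg_left h2 hr.le
      _ = K * (Real.exp (t/τ) * Real.exp (-r^2*t/4)) := by rw [hK]; ring
      _ = K * Real.exp (lam * t) := by rw [h3]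
  -- B t = K/lam * exp(lam t); B ± w are monotone
  set B : ℝ → ℝ := fun t => K / lam * Real.exp (lam * t) with hB
  have hB' : ∀ t : ℝ, HasDerivAt B (K * Real.exp (lam * t)) t := by
    intro t
    have h1 : HasDerivAt (fun t : ℝ => lam * t) lam t := by
      simpa using (hasDerivAt_id t).const_mul lam
    have h2 := (h1.exp).const_mul (K / lam)
    refine h2.congr_deriv ?_
    field_simp
  have hwbound : ∀ t ≥ (0:ℝ), |w t| ≤ |w 0| + B t := by
    intro t ht
    have hmono1 := mono_from_deriv (f := fun t => B t - w t)
      (f' := fun t => K * Real.exp (lam * t) - W t)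
      (fun s hs => (hB' s).sub (hw' s hs))
      (fun s hs => by
        have h := abs_le.1 (hWbound s hs)
        show 0 ≤ K * Real.exp (lam * s) - W s
        linarith [h.2])
    have hmono2 := mono_from_deriv (f := fun t => B t + w t)
      (f' := fun t => K * Real.exp (lam * t) + W t)
      (fun s hs => (hB' s).add (hw' s hs))
      (fun s hs => by
        have h := abs_le.1 (hWbound s hs)
        show 0 ≤ K * Real.exp (lam * s) + W s
        linarith [h.1])
    have h1 : B 0 - w 0 ≤ B t - w t := hmono1 t ht
    have h2 : B 0 + w 0 ≤ B t + w t := hmono2 t ht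
    have hB0 : 0 ≤ B 0 := by
      simp only [hB]
      positivity
    have hwle := le_abs_self (w 0)
    have hwge := neg_abs_le (w 0)
    rw [abs_le]
    constructor <;> [linarith; linarith]
  -- conclude
  intro t ht
  have hwt := hwbound t ht
  have hw0 : w 0 = u 0 - ψ 0 := by simp [hw]
  have hvt : u t - ψ t = w t * Real.exp (-t/τ) := by
    rw [hw, mul_assoc, ← Real.exp_add]
    have h : t/τ + -t/τ = 0 := by ring
    rw [h, Real.exp_zero, mul_one]
  have hEneg : 0 < Real.exp (-t/τ) := Real.exp_pos _
  have step : |u t - ψ t| ≤ (|u 0 - ψ 0| + B t) * Real.exp (-t/τ) := by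
    rw [hvt, abs_mul, abs_exp]
    apply mul_le_mul_of_nonneg_right _ hEneg.le
    rw [← hw0]; exact hwt
  have hBt : B t * Real.exp (-t/τ) = K / lam * Real.exp (-r^2*t/4) := by
    rw [hB]
    rw [mul_assoc, ← Real.exp_add]
    congr 2
    rw [hlam]; ring
  have hKlam : K / lam ≤ 5 * τ * r * S := by
    rw [div_le_iff₀ hlampos, hK, hlam]
    have h1 : r^2 * τ ≤ 1/4 := by nlinarith [mul_nonneg (sub_nonneg.2 hr2) hτ.le]
    have h2 : 5 * τ * r * S * (1/τ - r^2/4) = 5 * (r * S) - (5/4) * (r^2 * τ) * (r * S) := by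
      field_simp
    rw [h2]
    nlinarith [mul_nonneg hr.le hSnn,
      mul_nonneg (by linarith : (0:ℝ) ≤ 1/4 - r^2*τ) (mul_nonneg hr.le hSnn)]
  calc |u t - ψ t| ≤ (|u 0 - ψ 0| + B t) * Real.exp (-t/τ) := step
    _ = Real.exp (-t/τ) * |u 0 - ψ 0| + B t * Real.exp (-t/τ) := by ring
    _ = Real.exp (-t/τ) * |u 0 - ψ 0| + K / lam * Real.exp (-r^2*t/4) := by rw [hBt]
    _ ≤ Real.exp (-t/τ) * |u 0 - ψ 0| + 5 * τ * r * S * Real.exp (-r^2*t/4) := by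
        have h := mul_le_mul_of_nonneg_right hKlam (Real.exp_pos (-r^2*t/4)).le
        linarith
    _ = Real.exp (-t/τ) * |u 0 - ψ 0| + 5 * τ * r * Real.exp (-r^2*t/4) * (|a 0| + |ψ 0|) := by
        rw [hS]; ring
end

section
/- There exists a constant C > 0 such that for all τ ∈ (0, 1/4], all r > 0 with τr² ≥ 2, and all differentiable functions Φ, Ψ : [0, ∞) → ℝ satisfying Φ'(t) = −(1/τ)·(Φ(t) − Ψ(t)) and Ψ'(t) = −r²·Ψ(t) for all t ≥ 0, one has |Φ(t) − Ψ(t)| ≤ C·τ·e^{−2t}·(|Φ(0)| + |Ψ(0)|) for all t ≥ 1. -/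
/-- If `f` has zero derivative at every `t ≥ 0`, then `f` is constant on `[0, ∞)`. -/
lemma const_of_deriv_zero_aux (f : ℝ → ℝ) (hf : ∀ t ≥ (0:ℝ), HasDerivAt f 0 t) :
    ∀ t ≥ (0:ℝ), f t = f 0 := by
  intro t ht
  have hcont : ContinuousOn f (Set.Icc 0 t) := fun x hx =>
    ((hf x hx.1).continuousAt).continuousWithinAt
  have hderiv : ∀ x ∈ Set.Ico (0:ℝ) t, HasDerivWithinAt f 0 (Set.Ici x) x :=
    fun x hx => (hf x hx.1).hasDerivWithinAt
  exact constant_of_has_deriv_right_zero hcont hderiv t (Set.right_mem_Icc.2 ht)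

/-- `e^{-x} ≤ 1/x` for `x > 0`. -/
lemma exp_neg_le_inv_aux {x : ℝ} (hx : 0 < x) : Real.exp (-x) ≤ 1 / x := by
  rw [Real.exp_neg, one_div]
  exact inv_anti₀ hx (le_trans (by linarith) (Real.add_one_le_exp x))

/-- High-frequency τ-gain for the relative vorticity: there is `C > 0` such that
for `τ ∈ (0, 1/4]`, `r > 0` with `τr² ≥ 2`, and solutions of `Φ' = −(1/τ)(Φ − Ψ)`,
`Ψ' = −r²Ψ`, one has `|Φ(t) − Ψ(t)| ≤ Cτ e^{−2t}(|Φ(0)| + |Ψ(0)|)` for `t ≥ 1`. -/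
theorem relative_vorticity_high_frequency :
    ∃ C > (0:ℝ), ∀ τ r : ℝ, 0 < τ → τ ≤ 1/4 → 0 < r → 2 ≤ τ * r^2 →
      ∀ Φ Ψ : ℝ → ℝ,
      (∀ t ≥ (0:ℝ), HasDerivAt Φ (-(1/τ) * (Φ t - Ψ t)) t) →
      (∀ t ≥ (0:ℝ), HasDerivAt Ψ (-r^2 * Ψ t) t) →
      ∀ t ≥ (1:ℝ), |Φ t - Ψ t| ≤ C * τ * Real.exp (-2*t) * (|Φ 0| + |Ψ 0|) := by
  refine ⟨5 * Real.exp 2, by positivity, ?_⟩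
  intro τ r hτ hτ4 hr hτr Φ Ψ hΦ hΨ t ht
  have ht0 : (0:ℝ) ≤ t := by linarith
  set a : ℝ := 1/τ with ha_def
  set b : ℝ := r^2 with hb_def
  have ha : 0 < a := by positivity
  have hb : 0 < b := by positivity
  have ha4 : 4 ≤ a := by
    rw [ha_def, le_div_iff₀ hτ]; linarith
  have hb2a : 2 * a ≤ b := by
    rw [ha_def, mul_one_div, div_le_iff₀ hτ]; nlinarith
  have hba : a < b := by linarith
  have hba0 : (0:ℝ) < b - a := by linarith
  set c : ℝ := b * Ψ 0 / (b - a) with hc_def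
  have hc : c * (b - a) = b * Ψ 0 := by
    rw [hc_def, div_mul_cancel₀ _ hba0.ne']
  -- Step 1 : Ψ s = Ψ 0 * exp (-b s) for s ≥ 0
  have hΨ_eq : ∀ s ≥ (0:ℝ), Ψ s = Ψ 0 * Real.exp (-b * s) := by
    have key : ∀ s ≥ (0:ℝ), Ψ s * Real.exp (b*s) = Ψ 0 * Real.exp (b*0) := by
      apply const_of_deriv_zero_aux
      intro s hs
      have he : HasDerivAt (fun s => Real.exp (b*s)) (Real.exp (b*s) * b) s := by
        simpa using ((hasDerivAt_id s).const_mul b).exp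
      have := (hΨ s hs).mul he
      refine this.congr_deriv (Eq.symm ?_)
      ring
    intro s hs
    have h := key s hs
    rw [mul_zero, Real.exp_zero, mul_one] at h
    have h1 : Real.exp (b*s) * Real.exp (-b*s) = 1 := by
      rw [← Real.exp_add]; ring_nf; exact Real.exp_zero
    linear_combination Real.exp (-b*s) * h - Ψ s * h1
  -- Step 2 : the integrating-factor combination is constant
  have key2 : ∀ s ≥ (0:ℝ),
      (Φ s - Ψ s) * Real.exp (a*s) + c * Real.exp ((a-b)*s)
        = (Φ 0 - Ψ 0) + c := by
    have key : ∀ s ≥ (0:ℝ),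
        (Φ s - Ψ s) * Real.exp (a*s) + c * Real.exp ((a-b)*s)
          = (Φ 0 - Ψ 0) * Real.exp (a*0) + c * Real.exp ((a-b)*0) := by
      apply const_of_deriv_zero_aux
      intro s hs
      have hea : HasDerivAt (fun s => Real.exp (a*s)) (Real.exp (a*s) * a) s := by
        simpa using ((hasDerivAt_id s).const_mul a).exp
      have heab : HasDerivAt (fun s => Real.exp ((a-b)*s)) (Real.exp ((a-b)*s) * (a-b)) s := by
        simpa using ((hasDerivAt_id s).const_mul (a-b)).exp
      have hD : HasDerivAt (fun s => Φ s - Ψ s)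
          ((-(1/τ) * (Φ s - Ψ s)) - (-b * Ψ s)) s := (hΦ s hs).sub (hΨ s hs)
      have hder := (hD.mul hea).add (heab.const_mul c)
      refine hder.congr_deriv (Eq.symm ?_)
      have hΨs : Ψ s = Ψ 0 * Real.exp (-b * s) := hΨ_eq s hs
      have hexp : Real.exp (a*s) * Real.exp (-b*s) = Real.exp ((a-b)*s) := by
        rw [← Real.exp_add]; ring_nf
      have hta : -(1/τ) = -a := by rw [ha_def]
      rw [hΨs, hta]
      linear_combination Real.exp ((a-b)*s) * hc - (b * Ψ 0) * hexp
    intro s hs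
    have h := key s hs
    simpa using h
  -- explicit formula at time t
  have hform : Φ t - Ψ t
      = ((Φ 0 - Ψ 0) + c) * Real.exp (-a*t) - c * Real.exp (-b*t) := by
    have h := key2 t ht0
    have h1 : Real.exp (a*t) * Real.exp (-a*t) = 1 := by
      rw [← Real.exp_add]; ring_nf; exact Real.exp_zero
    have h2 : Real.exp ((a-b)*t) * Real.exp (-a*t) = Real.exp (-b*t) := by
      rw [← Real.exp_add]; ring_nf
    linear_combination Real.exp (-a*t) * h - (Φ t - Ψ t) * h1 - c * h2
  -- Step 3 : estimates
  have hc_bound : |c| ≤ 2 * |Ψ 0| := by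
    rw [hc_def, abs_div, abs_mul, abs_of_pos hba0, abs_of_pos hb,
      div_le_iff₀ hba0]
    nlinarith [abs_nonneg (Ψ 0)]
  have hτa : 1 / a = τ := by rw [ha_def]; field_simp
  have e2pos := (Real.exp_pos (-2*t)).le
  have hE1 : Real.exp (-a*t) ≤ Real.exp 2 * τ * Real.exp (-2*t) := by
    have h1 : Real.exp (-a*t) = Real.exp ((2-a)*t) * Real.exp (-2*t) := by
      rw [← Real.exp_add]; ring_nf
    have h3 : Real.exp ((2-a)*t) ≤ Real.exp 2 * Real.exp (-a) := by
      rw [← Real.exp_add]; exact Real.exp_le_exp.2 (by nlinarith)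
    have h4 : Real.exp (-a) ≤ τ := hτa ▸ exp_neg_le_inv_aux ha
    calc Real.exp (-a*t) = Real.exp ((2-a)*t) * Real.exp (-2*t) := h1
      _ ≤ (Real.exp 2 * Real.exp (-a)) * Real.exp (-2*t) :=
          mul_le_mul_of_nonneg_right h3 e2pos
      _ ≤ (Real.exp 2 * τ) * Real.exp (-2*t) :=
          mul_le_mul_of_nonneg_right
            (mul_le_mul_of_nonneg_left h4 (Real.exp_pos 2).le) e2pos
  have hE2 : Real.exp (-b*t) ≤ Real.exp 2 * τ * Real.exp (-2*t) := by
    have h1 : Real.exp (-b*t) = Real.exp ((2-b)*t) * Real.exp (-2*t) := by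
      rw [← Real.exp_add]; ring_nf
    have h3 : Real.exp ((2-b)*t) ≤ Real.exp 2 * Real.exp (-b) := by
      rw [← Real.exp_add]; exact Real.exp_le_exp.2 (by nlinarith)
    have h4 : Real.exp (-b) ≤ τ := by
      calc Real.exp (-b) ≤ 1/b := exp_neg_le_inv_aux hb
        _ ≤ 1/a := one_div_le_one_div_of_le ha hba.le
        _ = τ := hτa
    calc Real.exp (-b*t) = Real.exp ((2-b)*t) * Real.exp (-2*t) := h1
      _ ≤ (Real.exp 2 * Real.exp (-b)) * Real.exp (-2*t) :=
          mul_le_mul_of_nonneg_right h3 e2pos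
      _ ≤ (Real.exp 2 * τ) * Real.exp (-2*t) :=
          mul_le_mul_of_nonneg_right
            (mul_le_mul_of_nonneg_left h4 (Real.exp_pos 2).le) e2pos
  -- combine
  have habs0 : |(Φ 0 - Ψ 0) + c| ≤ |Φ 0| + 3 * |Ψ 0| := by
    calc |(Φ 0 - Ψ 0) + c| ≤ |Φ 0 - Ψ 0| + |c| := abs_add_le _ _
      _ ≤ (|Φ 0| + |Ψ 0|) + 2 * |Ψ 0| := add_le_add (abs_sub _ _) hc_bound
      _ = |Φ 0| + 3 * |Ψ 0| := by ring
  have hnn : (0:ℝ) ≤ Real.exp 2 * τ * Real.exp (-2*t) := by positivity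
  rw [hform]
  calc |((Φ 0 - Ψ 0) + c) * Real.exp (-a*t) - c * Real.exp (-b*t)|
      ≤ |((Φ 0 - Ψ 0) + c) * Real.exp (-a*t)| + |c * Real.exp (-b*t)| := abs_sub _ _
    _ = |(Φ 0 - Ψ 0) + c| * Real.exp (-a*t) + |c| * Real.exp (-b*t) := by
        rw [abs_mul, abs_mul, abs_of_pos (Real.exp_pos _), abs_of_pos (Real.exp_pos _)]
    _ ≤ (|Φ 0| + 3 * |Ψ 0|) * Real.exp (-a*t) + (2 * |Ψ 0|) * Real.exp (-b*t) :=
        add_le_add (mul_le_mul_of_nonneg_right habs0 (Real.exp_pos _).le)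
          (mul_le_mul_of_nonneg_right hc_bound (Real.exp_pos _).le)
    _ ≤ (|Φ 0| + 3 * |Ψ 0|) * (Real.exp 2 * τ * Real.exp (-2*t))
          + (2 * |Ψ 0|) * (Real.exp 2 * τ * Real.exp (-2*t)) :=
        add_le_add (mul_le_mul_of_nonneg_left hE1 (by positivity))
          (mul_le_mul_of_nonneg_left hE2 (by positivity))
    _ = (Real.exp 2 * τ * Real.exp (-2*t)) * (|Φ 0| + 5 * |Ψ 0|) := by ring
    _ ≤ (Real.exp 2 * τ * Real.exp (-2*t)) * (5 * (|Φ 0| + |Ψ 0|)) := by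
        apply mul_le_mul_of_nonneg_left _ hnn
        nlinarith [abs_nonneg (Φ 0), abs_nonneg (Ψ 0)]
    _ = 5 * Real.exp 2 * τ * Real.exp (-2*t) * (|Φ 0| + |Ψ 0|) := by ring
end

section
/- For every α > 0 there exists a constant C_α > 0 such that for all τ ∈ (0, 1] and all t ≥ 0: ∫₀ᵗ e^{−(t−s)/τ}·(1 + s²)^{−α/2} ds ≤ C_α · τ · (1 + t²)^{−α/2}. -/
open Real

lemma poly_exp_aux (α : ℝ) (hα : 0 < α) :
    ∃ K > (0:ℝ), ∀ x : ℝ, 0 ≤ x → x * (1 + 4*x^2)^(α/2) * Real.exp (-x) ≤ K := by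
  set n : ℕ := ⌈α⌉₊ with hn
  refine ⟨2^(n+1) * (n+1)^(n+1), by positivity, fun x hx => ?_⟩
  have hb : (1:ℝ) ≤ 1 + 2*x := by linarith
  have h1 : (1 + 4*x^2)^(α/2) ≤ (1+2*x)^((n:ℝ)) := by
    have e1 : (1 + 4*x^2 : ℝ) ≤ (1+2*x)^(2:ℕ) := by nlinarith
    calc (1 + 4*x^2)^(α/2) ≤ ((1+2*x)^(2:ℕ))^(α/2) :=
          Real.rpow_le_rpow (by positivity) e1 (by positivity)
      _ = (1+2*x)^α := by
          rw [← Real.rpow_natCast (1+2*x) 2, ← Real.rpow_mul (by linarith)]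
          congr 1; ring
      _ ≤ (1+2*x)^((n:ℝ)) := Real.rpow_le_rpow_of_exponent_le hb (Nat.le_ceil α)
  rw [Real.rpow_natCast] at h1
  have h5 : (1+x)^(n+1) ≤ (n+1:ℝ)^(n+1) * Real.exp x := by
    have hnp : (0:ℝ) < (n:ℝ)+1 := by positivity
    have e2 : 1 + x ≤ ((n:ℝ)+1) * Real.exp (x/((n:ℝ)+1)) := by
      have := Real.add_one_le_exp (x/((n:ℝ)+1))
      have h3 : (1:ℝ) + x ≤ ((n:ℝ)+1) * (x/((n:ℝ)+1) + 1) := by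
        rw [mul_add, mul_div_cancel₀ _ hnp.ne']; nlinarith
      calc (1:ℝ) + x ≤ ((n:ℝ)+1) * (x/((n:ℝ)+1) + 1) := h3
        _ ≤ ((n:ℝ)+1) * Real.exp (x/((n:ℝ)+1)) := by
            exact mul_le_mul_of_nonneg_left this hnp.le
    calc (1+x)^(n+1) ≤ (((n:ℝ)+1) * Real.exp (x/((n:ℝ)+1)))^(n+1) :=
          pow_le_pow_left₀ (by linarith) e2 _
      _ = ((n:ℝ)+1)^(n+1) * (Real.exp (x/((n:ℝ)+1)))^(n+1) := mul_pow _ _ _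
      _ = (n+1:ℝ)^(n+1) * Real.exp x := by
          rw [← Real.exp_nat_mul]
          have hcast : ((n+1:ℕ):ℝ) * (x/((n:ℝ)+1)) = x := by
            push_cast; field_simp
          rw [hcast]
  have hkey : x * (1+2*x)^n ≤ 2^(n+1) * ((1+x)^(n+1)) := by
    calc x * (1+2*x)^n ≤ (1+2*x) * (1+2*x)^n :=
          mul_le_mul_of_nonneg_right (by linarith) (by positivity)
      _ = (1+2*x)^(n+1) := (pow_succ' _ _).symm
      _ ≤ (2*(1+x))^(n+1) := pow_le_pow_left₀ (by linarith) (by linarith) _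
      _ = 2^(n+1) * ((1+x)^(n+1)) := mul_pow _ _ _
  have hexp : Real.exp (-x) = (Real.exp x)⁻¹ := by rw [Real.exp_neg]
  have hfin : x * (1 + 4*x^2)^(α/2) * Real.exp (-x)
      ≤ 2^(n+1) * ((n+1:ℝ)^(n+1) * Real.exp x) * Real.exp (-x) := by
    have : x * (1 + 4*x^2)^(α/2) ≤ 2^(n+1) * ((n+1:ℝ)^(n+1) * Real.exp x) := by
      calc x * (1 + 4*x^2)^(α/2) ≤ x * (1+2*x)^n :=
            mul_le_mul_of_nonneg_left h1 hx
        _ ≤ 2^(n+1) * ((1+x)^(n+1)) := hkey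
        _ ≤ 2^(n+1) * ((n+1:ℝ)^(n+1) * Real.exp x) :=
            mul_le_mul_of_nonneg_left h5 (by positivity)
    exact mul_le_mul_of_nonneg_right this (Real.exp_nonneg _)
  calc x * (1 + 4*x^2)^(α/2) * Real.exp (-x)
      ≤ 2^(n+1) * ((n+1:ℝ)^(n+1) * Real.exp x) * Real.exp (-x) := hfin
    _ = 2^(n+1) * (n+1:ℝ)^(n+1) * (Real.exp x * Real.exp (-x)) := by ring
    _ = 2^(n+1) * (n+1:ℝ)^(n+1) := by rw [← Real.exp_add]; simp

/-- Convolution estimate for the exponentially damped kernel against a polynomial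
weight: for every `α > 0` there is `C > 0` with
`∫₀ᵗ e^{−(t−s)/τ} (1+s²)^{−α/2} ds ≤ Cτ (1+t²)^{−α/2}` for `τ ∈ (0,1]`, `t ≥ 0`. -/
theorem damped_kernel_convolution (α : ℝ) (hα : 0 < α) :
    ∃ C > (0:ℝ), ∀ τ : ℝ, 0 < τ → τ ≤ 1 → ∀ t : ℝ, 0 ≤ t →
      (∫ s in (0:ℝ)..t, Real.exp (-(t-s)/τ) * (1 + s^2)^(-α/2)) ≤
        C * τ * (1 + t^2)^(-α/2) := by
  obtain ⟨K, hKpos, hK⟩ := poly_exp_aux α hα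
  refine ⟨K + 4^(α/2), by positivity, fun τ hτ0 hτ1 t ht => ?_⟩
  have hbt : (0:ℝ) < 1 + t^2 := by positivity
  have hcont : Continuous fun s : ℝ => Real.exp (-(t-s)/τ) * (1+s^2)^(-α/2) := by
    have h1 : Continuous fun s : ℝ => Real.exp (-(t-s)/τ) := by fun_prop
    have h2 : Continuous fun s : ℝ => (1+s^2)^(-α/2 : ℝ) := by
      apply Continuous.rpow_const (by fun_prop)
      intro x; left; positivity
    exact h1.mul h2
  have hcexp : Continuous fun s : ℝ => Real.exp (-(t-s)/τ) := by fun_prop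
  -- split the integral
  have hsplit : (∫ s in (0:ℝ)..t, Real.exp (-(t-s)/τ) * (1 + s^2)^(-α/2))
      = (∫ s in (0:ℝ)..t/2, Real.exp (-(t-s)/τ) * (1 + s^2)^(-α/2))
        + (∫ s in (t/2)..t, Real.exp (-(t-s)/τ) * (1 + s^2)^(-α/2)) :=
    (intervalIntegral.integral_add_adjacent_intervals
      (hcont.intervalIntegrable _ _) (hcont.intervalIntegrable _ _)).symm
  -- first piece
  have hI1 : (∫ s in (0:ℝ)..t/2, Real.exp (-(t-s)/τ) * (1 + s^2)^(-α/2))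
      ≤ (t/2) * Real.exp (-(t/2)/τ) := by
    have hmono : (∫ s in (0:ℝ)..t/2, Real.exp (-(t-s)/τ) * (1 + s^2)^(-α/2))
        ≤ ∫ _ in (0:ℝ)..t/2, Real.exp (-(t/2)/τ) := by
      apply intervalIntegral.integral_mono_on (by linarith)
        (hcont.intervalIntegrable _ _) intervalIntegrable_const
      intro s hs
      obtain ⟨hs0, hs1⟩ := hs
      have he : Real.exp (-(t-s)/τ) ≤ Real.exp (-(t/2)/τ) :=
        Real.exp_le_exp.mpr ((div_le_div_iff_of_pos_right hτ0).mpr (by linarith))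
      have hr : (1+s^2)^(-α/2 : ℝ) ≤ 1 :=
        Real.rpow_le_one_of_one_le_of_nonpos (by nlinarith) (by linarith)
      calc Real.exp (-(t-s)/τ) * (1+s^2)^(-α/2 : ℝ)
          ≤ Real.exp (-(t/2)/τ) * 1 :=
            mul_le_mul he hr (Real.rpow_nonneg (by positivity) _) (Real.exp_nonneg _)
        _ = Real.exp (-(t/2)/τ) := mul_one _
    have hconst : (∫ _ in (0:ℝ)..t/2, Real.exp (-(t/2)/τ)) = (t/2) * Real.exp (-(t/2)/τ) := by
      simp
    rw [hconst] at hmono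
    exact hmono
  -- bound the first piece by K τ (1+t²)^{-α/2}
  have hI1' : (t/2) * Real.exp (-(t/2)/τ) ≤ K * τ * (1 + t^2)^(-α/2) := by
    set x := t/(2*τ) with hxdef
    have hx0 : 0 ≤ x := by positivity
    have hK' := hK x hx0
    have htx : t = 2*τ*x := by rw [hxdef, mul_div_cancel₀ _ (by positivity : (2*τ) ≠ 0)]
    have h2x : t ≤ 2*x := by
      rw [htx]
      have := mul_le_of_le_one_left hx0 hτ1
      linarith
    have ht2 : t^2 ≤ 4*x^2 := by nlinarith [h2x, ht]
    have h2 : (1+t^2)^(α/2) ≤ (1+4*x^2)^(α/2) :=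
      Real.rpow_le_rpow hbt.le (by linarith) (by positivity)
    have hxe0 : 0 ≤ x * Real.exp (-x) :=
      mul_nonneg hx0 (Real.exp_nonneg _)
    have h3 : x * Real.exp (-x) * (1+t^2)^(α/2) ≤ K := by
      calc x * Real.exp (-x) * (1+t^2)^(α/2)
          ≤ x * Real.exp (-x) * (1+4*x^2)^(α/2) :=
            mul_le_mul_of_nonneg_left h2 hxe0
        _ = x * (1+4*x^2)^(α/2) * Real.exp (-x) := by ring
        _ ≤ K := hK'
    have hbpos : (0:ℝ) < (1+t^2)^(α/2) := Real.rpow_pos_of_pos hbt _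
    have h4 : x * Real.exp (-x) ≤ K * (1+t^2)^(-α/2) := by
      rw [show (-α/2 : ℝ) = -(α/2) by ring, Real.rpow_neg hbt.le,
        ← div_eq_mul_inv, le_div_iff₀ hbpos]
      exact h3
    have heq : (t/2) * Real.exp (-(t/2)/τ) = τ * (x * Real.exp (-x)) := by
      rw [htx]
      have : -(2*τ*x/2)/τ = -x := by field_simp
      rw [this]; ring
    rw [heq]
    calc τ * (x * Real.exp (-x)) ≤ τ * (K * (1+t^2)^(-α/2)) :=
          mul_le_mul_of_nonneg_left h4 hτ0.le
      _ = K * τ * (1+t^2)^(-α/2) := by ring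
  -- second piece
  set D : ℝ := 4^(α/2) * (1+t^2)^(-α/2) with hD
  have hDpos : 0 < D := by
    apply mul_pos (Real.rpow_pos_of_pos (by norm_num) _) (Real.rpow_pos_of_pos hbt _)
  have hI2 : (∫ s in (t/2)..t, Real.exp (-(t-s)/τ) * (1 + s^2)^(-α/2))
      ≤ τ * D := by
    have hptw : ∀ s ∈ Set.Icc (t/2) t,
        Real.exp (-(t-s)/τ) * (1 + s^2)^(-α/2 : ℝ) ≤ Real.exp (-(t-s)/τ) * D := by
      intro s hs
      obtain ⟨hs0, hs1⟩ := hs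
      have hr1 : (1+s^2)^(-α/2 : ℝ) ≤ (1+(t/2)^2)^(-α/2 : ℝ) :=
        Real.rpow_le_rpow_of_nonpos (by positivity) (by nlinarith) (by linarith)
      have hr2 : (1+(t/2)^2)^(-α/2 : ℝ) ≤ ((1+t^2)/4)^(-α/2 : ℝ) :=
        Real.rpow_le_rpow_of_nonpos (by positivity) (by nlinarith) (by linarith)
      have hr3 : ((1+t^2)/4)^(-α/2 : ℝ) = D := by
        rw [hD, show (-α/2 : ℝ) = -(α/2) by ring,
          Real.rpow_neg (by positivity : (0:ℝ) ≤ (1+t^2)/4), Real.rpow_neg hbt.le,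
          Real.div_rpow hbt.le (by norm_num : (0:ℝ) ≤ 4), inv_div, div_eq_mul_inv]
      have : (1+s^2)^(-α/2 : ℝ) ≤ D := by rw [← hr3]; exact hr1.trans hr2
      exact mul_le_mul_of_nonneg_left this (Real.exp_nonneg _)
    have hmono : (∫ s in (t/2)..t, Real.exp (-(t-s)/τ) * (1 + s^2)^(-α/2))
        ≤ ∫ s in (t/2)..t, Real.exp (-(t-s)/τ) * D :=
      intervalIntegral.integral_mono_on (by linarith)
        (hcont.intervalIntegrable _ _) ((hcexp.mul continuous_const).intervalIntegrable _ _)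
        hptw
    have hFTC : (∫ s in (t/2)..t, Real.exp (-(t-s)/τ))
        = τ - τ * Real.exp ((t/2-t)/τ) := by
      have hderiv : ∀ s ∈ Set.uIcc (t/2) t,
          HasDerivAt (fun u => τ * Real.exp ((u-t)/τ)) (Real.exp (-(t-s)/τ)) s := by
        intro s _
        have h1 : HasDerivAt (fun u : ℝ => (u-t)/τ) (1/τ) s :=
          ((hasDerivAt_id s).sub_const t).div_const τ
        have h2 := (h1.exp).const_mul τ
        refine h2.congr_deriv ?_
        rw [neg_sub]
        field_simp
      rw [intervalIntegral.integral_eq_sub_of_hasDerivAt hderiv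
        (hcexp.intervalIntegrable _ _)]
      simp
    have hIexp : (∫ s in (t/2)..t, Real.exp (-(t-s)/τ)) ≤ τ := by
      rw [hFTC]
      have : 0 ≤ τ * Real.exp ((t/2-t)/τ) :=
        mul_nonneg hτ0.le (Real.exp_nonneg _)
      linarith
    calc (∫ s in (t/2)..t, Real.exp (-(t-s)/τ) * (1 + s^2)^(-α/2))
        ≤ ∫ s in (t/2)..t, Real.exp (-(t-s)/τ) * D := hmono
      _ = (∫ s in (t/2)..t, Real.exp (-(t-s)/τ)) * D :=
          intervalIntegral.integral_mul_const _ _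
      _ ≤ τ * D := mul_le_mul_of_nonneg_right hIexp hDpos.le
  -- combine
  rw [hsplit]
  have : τ * D = 4^(α/2) * τ * (1+t^2)^(-α/2) := by rw [hD]; ring
  calc (∫ s in (0:ℝ)..t/2, Real.exp (-(t-s)/τ) * (1 + s^2)^(-α/2))
        + (∫ s in (t/2)..t, Real.exp (-(t-s)/τ) * (1 + s^2)^(-α/2))
      ≤ K * τ * (1 + t^2)^(-α/2) + τ * D := add_le_add (hI1.trans hI1') hI2
    _ = (K + 4^(α/2)) * τ * (1 + t^2)^(-α/2) := by rw [this]; ring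
end
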